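/- Let n ≥ 1, Σ ≥ 0, R₀ ≥ 0, α ∈ [0, 1], δ ∈ ℝ, C₀ > 0, η₀ > 0, and 0 < T₀ ≤ ∞. Let K : ℝⁿ → [0, ∞) be measurable and suppose that for every d ≥ 0 and every x ∈ ℝⁿ: ∫_{{y : ‖y‖ ≥ R₀}} K(x − y)·‖y‖^d·exp(δ‖y‖^α) dy ≥ η₀·2^{−d}·‖x‖^d·exp(δ‖x‖^α). Let Λ : [0, T₀) → (0, ∞) be measurable and bounded on compact subintervals, and let V : ℝⁿ × [0, T₀) → [0, ∞) be measurable with V(y, t) ≥ 1 + Λ(t)·‖y‖^Σ whenever ‖y‖ ≥ R₀ and V(y, t) ≥ 1 for all y. Let u₀ : ℝⁿ → [0, ∞] satisfy u₀(x) ≥ C₀·exp(δ‖x‖^α) for all x, and let μ : ℝⁿ × [0, T₀) → [0, ∞] be measurable with μ(x, t) ≥ u₀(x) + ∫_0^t ∫_{ℝⁿ} K(x − y) V(y, τ) μ(y, τ) dy dτ for all x and t. Then for every integer N ≥ 0, every x ∈ ℝⁿ, and every t ∈ [0, T₀): μ(x, t) ≥ C₀ · η₀^N · 2^{−N(N+1)Σ/2}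 · (1/N!) · (∫_0^t Λ(τ) dτ)^N · ‖x‖^{ΣN} · exp(δ‖x‖^α). -/

import Mathlib

open MeasureTheory ENNReal

section AuxIter
open Filter Topology

noncomputable def Fprim (Λ : ℝ → ℝ) (τ : ℝ) : ℝ := ∫ s in Set.Ioc (0 : ℝ) τ, Λ s

private lemma sum_pow_lb (N : ℕ) : ∀ m : ℕ, 1 ≤ m →
    ((m : ℝ) - 1) ^ (N + 1) ≤ ((N : ℝ) + 1) * ∑ i ∈ Finset.range m, (i : ℝ) ^ N := by
  intro m hm
  induction m, hm using Nat.le_induction with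
  | base => simp; positivity
  | succ m hm ih =>
    have hx : (1 : ℝ) ≤ (m : ℝ) := by exact_mod_cast hm
    have hx0 : (0 : ℝ) < (m : ℝ) := by linarith
    have hber : 1 + ((N : ℝ) + 1) * (-(1 / (m : ℝ))) ≤ (1 + (-(1 / (m : ℝ)))) ^ (N + 1) := by
      have h1m : 1 / (m : ℝ) ≤ 1 := by rw [div_le_one hx0]; exact hx
      have := one_add_mul_le_pow (a := -(1 / (m : ℝ))) (by linarith) (N + 1)
      push_cast at this
      linarith
    have hb : (m : ℝ) ^ (N + 1) - ((N : ℝ) + 1) * (m : ℝ) ^ N ≤ ((m : ℝ) - 1) ^ (N + 1) := by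
      calc (m : ℝ) ^ (N + 1) - ((N : ℝ) + 1) * (m : ℝ) ^ N
          = (m : ℝ) ^ (N + 1) * (1 + ((N : ℝ) + 1) * (-(1 / (m : ℝ)))) := by
            field_simp
            ring
        _ ≤ (m : ℝ) ^ (N + 1) * (1 + (-(1 / (m : ℝ)))) ^ (N + 1) :=
            mul_le_mul_of_nonneg_left hber (by positivity)
        _ = ((m : ℝ) - 1) ^ (N + 1) := by
            rw [← mul_pow]
            congr 1
            field_simp
            ring
    rw [Finset.sum_range_succ]
    have hgoal : ((m : ℝ) + 1 - 1) ^ (N + 1) = (m : ℝ) ^ (N + 1) := by ring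
    push_cast
    rw [hgoal, mul_add]
    nlinarith [ih]

private lemma crux (Λ : ℝ → ℝ) (hΛmeas : Measurable Λ) (hΛpos : ∀ t, 0 < Λ t)
    (hΛbdd : ∀ t : ℝ, 0 ≤ t → BddAbove (Λ '' Set.Icc 0 t))
    (N : ℕ) (t : ℝ) (ht : 0 ≤ t) :
    ENNReal.ofReal (Fprim Λ t ^ (N + 1) / ((N : ℝ) + 1)) ≤
      ∫⁻ τ in Set.Ioc (0 : ℝ) t, ENNReal.ofReal (Λ τ * Fprim Λ τ ^ N) := by
  obtain ⟨M, hM⟩ := hΛbdd t ht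
  have hIntIcc : IntegrableOn Λ (Set.Icc 0 t) := by
    refine Measure.integrableOn_of_bounded (M := M) (measure_Icc_lt_top).ne
      hΛmeas.aestronglyMeasurable ?_
    filter_upwards [ae_restrict_mem measurableSet_Icc] with s hs
    rw [Real.norm_eq_abs, abs_of_pos (hΛpos s)]
    exact hM (Set.mem_image_of_mem _ hs)
  have hIntOn : ∀ a b : ℝ, 0 ≤ a → b ≤ t → IntegrableOn Λ (Set.Ioc a b) :=
    fun a b ha hb => hIntIcc.mono_set fun s hs => ⟨ha.trans hs.1.le, hs.2.trans hb⟩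
  have hFadd : ∀ a b : ℝ, 0 ≤ a → a ≤ b → b ≤ t →
      Fprim Λ b = Fprim Λ a + ∫ s in Set.Ioc a b, Λ s := by
    intro a b ha hab hb
    rw [Fprim, Fprim, ← setIntegral_union (Set.Ioc_disjoint_Ioc_of_le le_rfl) measurableSet_Ioc
      (hIntOn 0 a le_rfl (hab.trans hb)) (hIntOn a b ha hb),
      Set.Ioc_union_Ioc_eq_Ioc ha hab]
  have hFpiece : ∀ a b : ℝ, 0 ≤ a → a ≤ b → b ≤ t →
      ∫ s in Set.Ioc a b, Λ s = Fprim Λ b - Fprim Λ a := by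
    intro a b ha hab hb; rw [hFadd a b ha hab hb]; ring
  have hFmono : ∀ a b : ℝ, 0 ≤ a → a ≤ b → b ≤ t → Fprim Λ a ≤ Fprim Λ b := by
    intro a b ha hab hb
    rw [hFadd a b ha hab hb]
    have : 0 ≤ ∫ s in Set.Ioc a b, Λ s :=
      setIntegral_nonneg measurableSet_Ioc fun s _ => (hΛpos s).le
    linarith
  have hF0 : Fprim Λ 0 = 0 := by simp [Fprim]
  have hFnonneg : ∀ b : ℝ, 0 ≤ b → b ≤ t → 0 ≤ Fprim Λ b := by
    intro b hb hbt
    have := hFmono 0 b le_rfl hb hbt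
    rwa [hF0] at this
  have hv0 : 0 ≤ Fprim Λ t := hFnonneg t ht le_rfl
  rcases eq_or_lt_of_le hv0 with hveq | hvpos
  · rw [← hveq]
    simp [zero_pow (Nat.succ_ne_zero N)]
  have hFcont : ContinuousOn (Fprim Λ) (Set.Icc 0 t) :=
    intervalIntegral.continuousOn_primitive hIntIcc
  set v : ℝ := Fprim Λ t with hvdef
  have key : ∀ m : ℕ, 1 ≤ m →
      ENNReal.ofReal (v ^ (N + 1) / ((N : ℝ) + 1) * (((m : ℝ) - 1) / m) ^ (N + 1)) ≤
      ∫⁻ τ in Set.Ioc (0 : ℝ) t, ENNReal.ofReal (Λ τ * Fprim Λ τ ^ N) := by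
    intro m hm
    have hm0 : (0 : ℝ) < (m : ℝ) := by exact_mod_cast hm
    have hIVT : ∀ i : ℕ, ∃ c, c ∈ Set.Icc (0 : ℝ) t ∧ Fprim Λ c = ((min i m : ℕ) : ℝ) * v / m := by
      intro i
      have hmem : ((min i m : ℕ) : ℝ) * v / m ∈ Set.Icc (Fprim Λ 0) (Fprim Λ t) := by
        rw [hF0]
        constructor
        · exact div_nonneg (mul_nonneg (Nat.cast_nonneg _) hv0) hm0.le
        · rw [div_le_iff₀ hm0]
          have h1 : ((min i m : ℕ) : ℝ) ≤ (m : ℝ) := by exact_mod_cast min_le_right i m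
          nlinarith
      obtain ⟨c, hc, hc2⟩ := intermediate_value_Icc ht hFcont hmem
      exact ⟨c, hc, hc2⟩
    choose σ hσmem hσval using hIVT
    have hσval' : ∀ i : ℕ, i ≤ m → Fprim Λ (σ i) = (i : ℝ) * v / m := by
      intro i hi
      rw [hσval i, min_eq_left hi]
    have hσord : ∀ i j : ℕ, i ≤ j → j ≤ m → σ i ≤ σ j := by
      intro i j hij hj
      by_contra hc
      push_neg at hc
      have h1 : Fprim Λ (σ j) ≤ Fprim Λ (σ i) :=
        hFmono _ _ (hσmem j).1 hc.le (hσmem i).2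
      rw [hσval' j hj, hσval' i (hij.trans hj)] at h1
      have h3 : (j : ℝ) ≤ (i : ℝ) := by
        rw [div_le_div_iff_of_pos_right hm0] at h1
        exact le_of_mul_le_mul_right (by linarith [h1]) hvpos
      have h4 : i = j := le_antisymm hij (by exact_mod_cast h3)
      rw [h4] at hc
      exact lt_irrefl _ hc
    have cum : ∀ k : ℕ, k ≤ m →
        ∑ i ∈ Finset.range k, ENNReal.ofReal (((i : ℝ) * v / m) ^ N * (v / m)) ≤
        ∫⁻ τ in Set.Ioc (σ 0) (σ k), ENNReal.ofReal (Λ τ * Fprim Λ τ ^ N) := by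
      intro k
      induction k with
      | zero => intro _; simp
      | succ k ihk =>
        intro hk1
        have hk : k ≤ m := Nat.le_of_succ_le hk1
        have hord : σ k ≤ σ (k + 1) := hσord k (k + 1) (Nat.le_succ k) hk1
        have hσ0k : σ 0 ≤ σ k := hσord 0 k (Nat.zero_le k) hk
        rw [← Set.Ioc_union_Ioc_eq_Ioc hσ0k hord,
          lintegral_union measurableSet_Ioc (Set.Ioc_disjoint_Ioc_of_le le_rfl),
          Finset.sum_range_succ]
        refine add_le_add (ihk hk) ?_
        have ha0 : 0 ≤ σ k := (hσmem k).1
        have hbt : σ (k + 1) ≤ t := (hσmem (k + 1)).2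
        have step1 : ∫⁻ τ in Set.Ioc (σ k) (σ (k + 1)),
            ENNReal.ofReal (Fprim Λ (σ k) ^ N) * ENNReal.ofReal (Λ τ) ≤
            ∫⁻ τ in Set.Ioc (σ k) (σ (k + 1)), ENNReal.ofReal (Λ τ * Fprim Λ τ ^ N) := by
          refine lintegral_mono_ae ?_
          filter_upwards [ae_restrict_mem measurableSet_Ioc] with τ hτ
          rw [← ENNReal.ofReal_mul (pow_nonneg (hFnonneg _ ha0 (hσmem k).2) N)]
          refine ENNReal.ofReal_le_ofReal ?_
          have hFle : Fprim Λ (σ k) ≤ Fprim Λ τ :=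
            hFmono _ _ ha0 hτ.1.le (hτ.2.trans hbt)
          have hpow : Fprim Λ (σ k) ^ N ≤ Fprim Λ τ ^ N :=
            pow_le_pow_left₀ (hFnonneg _ ha0 (hσmem k).2) hFle N
          nlinarith [(hΛpos τ).le]
        refine le_trans ?_ step1
        rw [lintegral_const_mul' _ _ ENNReal.ofReal_ne_top,
          ← ofReal_integral_eq_lintegral_ofReal
            (hIntOn _ _ ha0 hbt) (Filter.Eventually.of_forall fun τ => (hΛpos τ).le),
          hFpiece _ _ ha0 hord hbt, hσval' k hk, hσval' (k + 1) hk1,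
          ← ENNReal.ofReal_mul
            (pow_nonneg (div_nonneg (mul_nonneg (Nat.cast_nonneg k) hv0) hm0.le) N)]
        refine ENNReal.ofReal_le_ofReal (le_of_eq ?_)
        congr 1
        rw [← sub_div]
        congr 1
        push_cast
        ring
    calc ENNReal.ofReal (v ^ (N + 1) / ((N : ℝ) + 1) * (((m : ℝ) - 1) / m) ^ (N + 1))
        ≤ ∑ i ∈ Finset.range m, ENNReal.ofReal (((i : ℝ) * v / m) ^ N * (v / m)) := by
          rw [← ENNReal.ofReal_sum_of_nonneg (fun i _ => mul_nonneg (pow_nonneg (div_nonneg (mul_nonneg (Nat.cast_nonneg i) hv0) hm0.le) N) (div_nonneg hv0 hm0.le))]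
          refine ENNReal.ofReal_le_ofReal ?_
          have hsum : ∑ i ∈ Finset.range m, ((i : ℝ) * v / m) ^ N * (v / m)
              = (v / m) ^ (N + 1) * ∑ i ∈ Finset.range m, (i : ℝ) ^ N := by
            rw [Finset.mul_sum]
            refine Finset.sum_congr rfl fun i _ => ?_
            rw [mul_div_assoc, mul_pow, pow_succ]
            ring
          rw [hsum]
          have hs := sum_pow_lb N m hm
          calc v ^ (N + 1) / ((N : ℝ) + 1) * (((m : ℝ) - 1) / m) ^ (N + 1)
              = (v / m) ^ (N + 1) * (((m : ℝ) - 1) ^ (N + 1) / ((N : ℝ) + 1)) := by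
                rw [div_pow, div_pow]
                ring
            _ ≤ (v / m) ^ (N + 1) * ∑ i ∈ Finset.range m, (i : ℝ) ^ N := by
                refine mul_le_mul_of_nonneg_left ?_ (by positivity)
                rw [div_le_iff₀ (by positivity : (0:ℝ) < (N : ℝ) + 1)]
                linarith
      _ ≤ ∫⁻ τ in Set.Ioc (σ 0) (σ m), ENNReal.ofReal (Λ τ * Fprim Λ τ ^ N) := cum m le_rfl
      _ ≤ ∫⁻ τ in Set.Ioc (0 : ℝ) t, ENNReal.ofReal (Λ τ * Fprim Λ τ ^ N) :=
          lintegral_mono_set (Set.Ioc_subset_Ioc (hσmem 0).1 (hσmem m).2)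
  have h2 : Tendsto (fun m : ℕ => ((m : ℝ) - 1) / m) atTop (𝓝 1) := by
    have h3 : Tendsto (fun m : ℕ => 1 - (m : ℝ)⁻¹) atTop (𝓝 (1 - 0)) :=
      tendsto_const_nhds.sub tendsto_inv_atTop_nhds_zero_nat
    rw [sub_zero] at h3
    refine h3.congr' ?_
    filter_upwards [Filter.eventually_ge_atTop 1] with m hm
    have hmne : (m : ℝ) ≠ 0 := by
      have : (1 : ℝ) ≤ (m : ℝ) := by exact_mod_cast hm
      linarith
    field_simp
  have h1 : Tendsto (fun m : ℕ => v ^ (N + 1) / ((N : ℝ) + 1) * (((m : ℝ) - 1) / m) ^ (N + 1))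
      atTop (𝓝 (v ^ (N + 1) / ((N : ℝ) + 1))) := by
    have := (h2.pow (N + 1)).const_mul (v ^ (N + 1) / ((N : ℝ) + 1))
    simpa using this
  have h4 := (ENNReal.continuous_ofReal.tendsto _).comp h1
  refine le_of_tendsto h4 ?_
  filter_upwards [Filter.eventually_ge_atTop 1] with m hm
  exact key m hm

end AuxIter

theorem iterated_lower_bound (n : ℕ) (hn : 1 ≤ n)
    (Sg R₀ α δ C₀ η₀ : ℝ) (hSg : 0 ≤ Sg) (hR₀ : 0 ≤ R₀)
    (hα : α ∈ Set.Icc (0 : ℝ) 1) (hC₀ : 0 < C₀) (hη₀ : 0 < η₀)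
    (T₀ : ℝ≥0∞) (hT₀ : 0 < T₀)
    (K : EuclideanSpace ℝ (Fin n) → ℝ) (hKmeas : Measurable K)
    (hK0 : ∀ z, 0 ≤ K z)
    (hK : ∀ d : ℝ, 0 ≤ d → ∀ x : EuclideanSpace ℝ (Fin n),
      ENNReal.ofReal (η₀ * 2 ^ (-d) * ‖x‖ ^ d * Real.exp (δ * ‖x‖ ^ α)) ≤
        ∫⁻ y in {y : EuclideanSpace ℝ (Fin n) | R₀ ≤ ‖y‖},
          ENNReal.ofReal (K (x - y) * (‖y‖ ^ d * Real.exp (δ * ‖y‖ ^ α))))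
    (Λ : ℝ → ℝ) (hΛmeas : Measurable Λ) (hΛpos : ∀ t, 0 < Λ t)
    (hΛbdd : ∀ t : ℝ, 0 ≤ t → BddAbove (Λ '' Set.Icc 0 t))
    (V : EuclideanSpace ℝ (Fin n) → ℝ → ℝ)
    (hVmeas : Measurable (Function.uncurry V))
    (hV0 : ∀ y, ∀ t : ℝ, 0 ≤ t → ENNReal.ofReal t < T₀ → 1 ≤ V y t)
    (hV1 : ∀ y : EuclideanSpace ℝ (Fin n), ∀ t : ℝ, 0 ≤ t → ENNReal.ofReal t < T₀ →
      R₀ ≤ ‖y‖ → 1 + Λ t * ‖y‖ ^ Sg ≤ V y t)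
    (u₀ : EuclideanSpace ℝ (Fin n) → ℝ≥0∞)
    (hu₀ : ∀ x : EuclideanSpace ℝ (Fin n),
      ENNReal.ofReal (C₀ * Real.exp (δ * ‖x‖ ^ α)) ≤ u₀ x)
    (μ : EuclideanSpace ℝ (Fin n) → ℝ → ℝ≥0∞)
    (hμmeas : Measurable (Function.uncurry μ))
    (hμ : ∀ x, ∀ t : ℝ, 0 ≤ t → ENNReal.ofReal t < T₀ →
      u₀ x + (∫⁻ τ in Set.Ioc (0 : ℝ) t, ∫⁻ y,
        ENNReal.ofReal (K (x - y) * V y τ) * μ y τ) ≤ μ x t) :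
    ∀ N : ℕ, ∀ x : EuclideanSpace ℝ (Fin n), ∀ t : ℝ,
      0 ≤ t → ENNReal.ofReal t < T₀ →
      ENNReal.ofReal (C₀ * η₀ ^ N *
          2 ^ (-((N : ℝ) * ((N : ℝ) + 1) * Sg / 2)) * (1 / (Nat.factorial N : ℝ)) *
          (∫ τ in Set.Ioc (0 : ℝ) t, Λ τ) ^ N * ‖x‖ ^ (Sg * (N : ℝ)) *
          Real.exp (δ * ‖x‖ ^ α)) ≤ μ x t := by
  intro N
  induction N with
  | zero =>
    intro x t ht htT
    have h0 : C₀ * η₀ ^ 0 * (2:ℝ) ^ (-(((0:ℕ) : ℝ) * (((0:ℕ) : ℝ) + 1) * Sg / 2)) *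
        (1 / (Nat.factorial 0 : ℝ)) * (∫ τ in Set.Ioc (0 : ℝ) t, Λ τ) ^ 0 *
        ‖x‖ ^ (Sg * ((0:ℕ) : ℝ)) * Real.exp (δ * ‖x‖ ^ α) = C₀ * Real.exp (δ * ‖x‖ ^ α) := by
      norm_num
    rw [h0]
    exact le_trans (hu₀ x) (le_trans le_self_add (hμ x t ht htT))
  | succ N IH =>
    intro x t ht htT
    -- notation
    have hFt : (∫ τ in Set.Ioc (0 : ℝ) t, Λ τ) = Fprim Λ t := rfl
    have hv0 : 0 ≤ Fprim Λ t :=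
      setIntegral_nonneg measurableSet_Ioc fun τ _ => (hΛpos τ).le
    have hd : (0:ℝ) ≤ Sg * ((N : ℝ) + 1) := by positivity
    have hcN0 : (0:ℝ) ≤ C₀ * η₀ ^ N * 2 ^ (-((N : ℝ) * ((N : ℝ) + 1) * Sg / 2)) *
        (1 / (Nat.factorial N : ℝ)) := by positivity
    have hB0 : (0:ℝ) ≤ η₀ * 2 ^ (-(Sg * ((N : ℝ) + 1))) * ‖x‖ ^ (Sg * ((N : ℝ) + 1)) *
        Real.exp (δ * ‖x‖ ^ α) := by positivity
    have inner : ∀ τ : ℝ, τ ∈ Set.Ioc (0:ℝ) t →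
        ENNReal.ofReal (Λ τ * Fprim Λ τ ^ N) *
          (ENNReal.ofReal (C₀ * η₀ ^ N * 2 ^ (-((N : ℝ) * ((N : ℝ) + 1) * Sg / 2)) *
            (1 / (Nat.factorial N : ℝ))) *
           ENNReal.ofReal (η₀ * 2 ^ (-(Sg * ((N : ℝ) + 1))) * ‖x‖ ^ (Sg * ((N : ℝ) + 1)) *
            Real.exp (δ * ‖x‖ ^ α))) ≤
        ∫⁻ y, ENNReal.ofReal (K (x - y) * V y τ) * μ y τ := by
      intro τ hτ
      have hτ0 : (0:ℝ) ≤ τ := hτ.1.le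
      have hτT : ENNReal.ofReal τ < T₀ :=
        lt_of_le_of_lt (ENNReal.ofReal_le_ofReal hτ.2) htT
      have hFτ : 0 ≤ Fprim Λ τ :=
        setIntegral_nonneg measurableSet_Ioc fun s _ => (hΛpos s).le
      have hA0 : (0:ℝ) ≤ (C₀ * η₀ ^ N * 2 ^ (-((N : ℝ) * ((N : ℝ) + 1) * Sg / 2)) *
          (1 / (Nat.factorial N : ℝ))) * (Λ τ * Fprim Λ τ ^ N) :=
        mul_nonneg hcN0 (mul_nonneg (hΛpos τ).le (pow_nonneg hFτ N))
      calc ENNReal.ofReal (Λ τ * Fprim Λ τ ^ N) *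
            (ENNReal.ofReal (C₀ * η₀ ^ N * 2 ^ (-((N : ℝ) * ((N : ℝ) + 1) * Sg / 2)) *
              (1 / (Nat.factorial N : ℝ))) *
             ENNReal.ofReal (η₀ * 2 ^ (-(Sg * ((N : ℝ) + 1))) * ‖x‖ ^ (Sg * ((N : ℝ) + 1)) *
              Real.exp (δ * ‖x‖ ^ α)))
          = ENNReal.ofReal ((C₀ * η₀ ^ N * 2 ^ (-((N : ℝ) * ((N : ℝ) + 1) * Sg / 2)) *
              (1 / (Nat.factorial N : ℝ))) * (Λ τ * Fprim Λ τ ^ N)) *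
            ENNReal.ofReal (η₀ * 2 ^ (-(Sg * ((N : ℝ) + 1))) * ‖x‖ ^ (Sg * ((N : ℝ) + 1)) *
              Real.exp (δ * ‖x‖ ^ α)) := by
            rw [ENNReal.ofReal_mul hcN0]; ring
        _ ≤ ENNReal.ofReal ((C₀ * η₀ ^ N * 2 ^ (-((N : ℝ) * ((N : ℝ) + 1) * Sg / 2)) *
              (1 / (Nat.factorial N : ℝ))) * (Λ τ * Fprim Λ τ ^ N)) *
            ∫⁻ y in {y : EuclideanSpace ℝ (Fin n) | R₀ ≤ ‖y‖},
              ENNReal.ofReal (K (x - y) * (‖y‖ ^ (Sg * ((N : ℝ) + 1)) *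
                Real.exp (δ * ‖y‖ ^ α))) :=
            mul_le_mul_right (hK (Sg * ((N : ℝ) + 1)) hd x) _
        _ = ∫⁻ y in {y : EuclideanSpace ℝ (Fin n) | R₀ ≤ ‖y‖},
              ENNReal.ofReal ((C₀ * η₀ ^ N * 2 ^ (-((N : ℝ) * ((N : ℝ) + 1) * Sg / 2)) *
                (1 / (Nat.factorial N : ℝ))) * (Λ τ * Fprim Λ τ ^ N)) *
              ENNReal.ofReal (K (x - y) * (‖y‖ ^ (Sg * ((N : ℝ) + 1)) *
                Real.exp (δ * ‖y‖ ^ α))) :=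
            (lintegral_const_mul' _ _ ENNReal.ofReal_ne_top).symm
        _ ≤ ∫⁻ y in {y : EuclideanSpace ℝ (Fin n) | R₀ ≤ ‖y‖},
              ENNReal.ofReal (K (x - y) * V y τ) * μ y τ := by
            refine lintegral_mono_ae ?_
            have hSmeas : MeasurableSet {y : EuclideanSpace ℝ (Fin n) | R₀ ≤ ‖y‖} :=
              measurableSet_le measurable_const continuous_norm.measurable
            filter_upwards [ae_restrict_mem hSmeas] with y hy
            have hIH := IH y τ hτ0 hτT
            have hVy : Λ τ * ‖y‖ ^ Sg ≤ V y τ := by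
              have := hV1 y τ hτ0 hτT hy
              linarith
            have hsplit : ‖y‖ ^ (Sg * ((N : ℝ) + 1)) = ‖y‖ ^ Sg * ‖y‖ ^ (Sg * (N : ℝ)) := by
              rw [show Sg * ((N : ℝ) + 1) = Sg + Sg * (N : ℝ) by ring,
                Real.rpow_add_of_nonneg (norm_nonneg y) hSg (by positivity)]
            have heq : (C₀ * η₀ ^ N * 2 ^ (-((N : ℝ) * ((N : ℝ) + 1) * Sg / 2)) *
                  (1 / (Nat.factorial N : ℝ))) * (Λ τ * Fprim Λ τ ^ N) *
                (K (x - y) * (‖y‖ ^ (Sg * ((N : ℝ) + 1)) * Real.exp (δ * ‖y‖ ^ α)))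
                = (K (x - y) * (Λ τ * ‖y‖ ^ Sg)) *
                  (C₀ * η₀ ^ N * 2 ^ (-((N : ℝ) * ((N : ℝ) + 1) * Sg / 2)) *
                    (1 / (Nat.factorial N : ℝ)) * Fprim Λ τ ^ N * ‖y‖ ^ (Sg * (N : ℝ)) *
                    Real.exp (δ * ‖y‖ ^ α)) := by
              rw [hsplit]; ring
            rw [← ENNReal.ofReal_mul hA0, heq,
              ENNReal.ofReal_mul (mul_nonneg (hK0 _) (mul_nonneg (hΛpos τ).le
                (Real.rpow_nonneg (norm_nonneg y) _)))]
            exact mul_le_mul'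
              (ENNReal.ofReal_le_ofReal (mul_le_mul_of_nonneg_left hVy (hK0 _))) hIH
        _ ≤ ∫⁻ y, ENNReal.ofReal (K (x - y) * V y τ) * μ y τ :=
            setLIntegral_le_lintegral _ _
    have mid : ENNReal.ofReal (Fprim Λ t ^ (N + 1) / ((N : ℝ) + 1)) *
        (ENNReal.ofReal (C₀ * η₀ ^ N * 2 ^ (-((N : ℝ) * ((N : ℝ) + 1) * Sg / 2)) *
          (1 / (Nat.factorial N : ℝ))) *
         ENNReal.ofReal (η₀ * 2 ^ (-(Sg * ((N : ℝ) + 1))) * ‖x‖ ^ (Sg * ((N : ℝ) + 1)) *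
          Real.exp (δ * ‖x‖ ^ α))) ≤
        ∫⁻ τ in Set.Ioc (0:ℝ) t, ∫⁻ y, ENNReal.ofReal (K (x - y) * V y τ) * μ y τ := by
      calc ENNReal.ofReal (Fprim Λ t ^ (N + 1) / ((N : ℝ) + 1)) *
            (ENNReal.ofReal (C₀ * η₀ ^ N * 2 ^ (-((N : ℝ) * ((N : ℝ) + 1) * Sg / 2)) *
              (1 / (Nat.factorial N : ℝ))) *
             ENNReal.ofReal (η₀ * 2 ^ (-(Sg * ((N : ℝ) + 1))) * ‖x‖ ^ (Sg * ((N : ℝ) + 1)) *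
              Real.exp (δ * ‖x‖ ^ α)))
          ≤ (∫⁻ τ in Set.Ioc (0:ℝ) t, ENNReal.ofReal (Λ τ * Fprim Λ τ ^ N)) *
            (ENNReal.ofReal (C₀ * η₀ ^ N * 2 ^ (-((N : ℝ) * ((N : ℝ) + 1) * Sg / 2)) *
              (1 / (Nat.factorial N : ℝ))) *
             ENNReal.ofReal (η₀ * 2 ^ (-(Sg * ((N : ℝ) + 1))) * ‖x‖ ^ (Sg * ((N : ℝ) + 1)) *
              Real.exp (δ * ‖x‖ ^ α))) :=
            mul_le_mul_left (crux Λ hΛmeas hΛpos hΛbdd N t ht) _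
        _ = ∫⁻ τ in Set.Ioc (0:ℝ) t, ENNReal.ofReal (Λ τ * Fprim Λ τ ^ N) *
            (ENNReal.ofReal (C₀ * η₀ ^ N * 2 ^ (-((N : ℝ) * ((N : ℝ) + 1) * Sg / 2)) *
              (1 / (Nat.factorial N : ℝ))) *
             ENNReal.ofReal (η₀ * 2 ^ (-(Sg * ((N : ℝ) + 1))) * ‖x‖ ^ (Sg * ((N : ℝ) + 1)) *
              Real.exp (δ * ‖x‖ ^ α))) :=
            (lintegral_mul_const' _ _
              (ENNReal.mul_ne_top ENNReal.ofReal_ne_top ENNReal.ofReal_ne_top)).symm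
        _ ≤ ∫⁻ τ in Set.Ioc (0:ℝ) t, ∫⁻ y, ENNReal.ofReal (K (x - y) * V y τ) * μ y τ := by
            refine lintegral_mono_ae ?_
            filter_upwards [ae_restrict_mem measurableSet_Ioc] with τ hτ
            exact inner τ hτ
    refine le_trans ?_ (le_trans mid (le_trans le_add_self (hμ x t ht htT)))
    rw [← ENNReal.ofReal_mul hcN0, ← ENNReal.ofReal_mul
      (div_nonneg (pow_nonneg hv0 _) (by positivity))]
    refine ENNReal.ofReal_le_ofReal (le_of_eq ?_)
    rw [hFt]
    have h2pow : (2:ℝ) ^ (-(((N:ℝ) + 1) * (((N:ℝ) + 1) + 1) * Sg / 2))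
        = 2 ^ (-((N:ℝ) * ((N:ℝ) + 1) * Sg / 2)) * 2 ^ (-(Sg * ((N:ℝ) + 1))) := by
      rw [← Real.rpow_add two_pos]
      congr 1
      ring
    have hfac : ((Nat.factorial N : ℕ) : ℝ) ≠ 0 := by positivity
    have hN1 : ((N:ℝ) + 1) ≠ 0 := by positivity
    rw [Nat.factorial_succ]
    push_cast
    rw [h2pow]
    field_simp
    ring
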